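/- Condition (NA) is preserved under composition with continuous functions that diverge at ±∞: let X satisfy condition (NA), and let f : ℝ → ℝ be a continuous function satisfying either lim_{x→−∞} f(x) = −∞ and lim_{x→+∞} f(x) = +∞, or lim_{x→−∞} f(x) = +∞ and lim_{x→+∞} f(x) = −∞. Then the process (f(X_t))_{t∈[0,T]} also satisfies condition (NA); that is, for every h ∈ (0,T), every stopping time τ taking values in [0, T−h), every C > 0, and every A ∈ 𝓕_τ with P(A) > 0, both P(A ∩ {sup_{t∈[h,T−τ)} (f(X_{τ+t}) − f(X_τ)) < −C}) > 0 and P(A ∩ {inf_{t∈[h,T−τ)} (f(X_{τ+t}) − f(X_τ)) > C}) > 0. -/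

import Mathlib

open MeasureTheory Set Filter

noncomputable section

/-- The event `F_X^1(τ, h, ∞, c) = {sup_{t∈[h,T−τ)} (X_{τ+t} − X_τ) < −c}`. -/
def FXevInfPos {Ω : Type*} (X : ℝ → Ω → ℝ) (T : ℝ) (τ : Ω → ℝ) (h c : ℝ) : Set Ω :=
  {ω | sSup ((fun t => X (τ ω + t) ω - X (τ ω) ω) '' Ico h (T - τ ω)) < -c}

/-- The event `F_X^{−1}(τ, h, ∞, c) = {inf_{t∈[h,T−τ)} (X_{τ+t} − X_τ) > c}`. -/
def FXevInfNeg {Ω : Type*} (X : ℝ → Ω → ℝ) (T : ℝ) (τ : Ω → ℝ) (h c : ℝ) : Set Ω :=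
  {ω | c < sInf ((fun t => X (τ ω + t) ω - X (τ ω) ω) '' Ico h (T - τ ω))}

/-- Condition (NA) of the paper (condition (4.1)): for every `h ∈ (0,T)`, every stopping
time `τ` with values in `[0, T−h)` and every `c > 0`, both
`P(F_X^1(τ,h,∞,c) | ℱ_τ) > 0` and `P(F_X^{−1}(τ,h,∞,c) | ℱ_τ) > 0` almost surely. -/
def CondNA {Ω : Type*} {m : MeasurableSpace Ω} (P : Measure Ω) (ℱ : Filtration ℝ m)
    (T : ℝ) (X : ℝ → Ω → ℝ) : Prop :=
  ∀ h ∈ Ioo (0:ℝ) T, ∀ (τ : Ω → ℝ) (hτ : IsStoppingTime ℱ (fun ω => (τ ω : WithTop ℝ))),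
    (∀ ω, τ ω ∈ Ico (0:ℝ) (T - h)) → ∀ c > (0:ℝ),
    (∀ᵐ ω ∂P, 0 < (P[(FXevInfPos X T τ h c).indicator (fun _ => (1:ℝ)) |
        hτ.measurableSpace]) ω) ∧
    (∀ᵐ ω ∂P, 0 < (P[(FXevInfNeg X T τ h c).indicator (fun _ => (1:ℝ)) |
        hτ.measurableSpace]) ω)

/-- Theorem 4.2 of the paper: condition (NA) is preserved under composition with a
continuous function `f` diverging to `∓∞` at `∓∞` (or to `±∞` at `∓∞`): if `X` satisfies
(NA), then for every `h ∈ (0,T)`, every stopping time `τ` with values in `[0, T−h)`, every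
`C > 0` and every `A ∈ ℱ_τ` with `P(A) > 0`, both
`P(A ∩ {sup_{t∈[h,T−τ)} (f(X_{τ+t}) − f(X_τ)) < −C}) > 0` and
`P(A ∩ {inf_{t∈[h,T−τ)} (f(X_{τ+t}) − f(X_τ)) > C}) > 0`. -/
lemma stoppedVal_meas {Ω : Type*} {m : MeasurableSpace Ω} (ℱ : Filtration ℝ m)
    (T : ℝ) (hT : 0 ≤ T) (X : ℝ → Ω → ℝ) (hadp : Adapted ℱ X)
    (hcont : ∀ ω, ContinuousOn (fun t => X t ω) (Icc 0 T))
    (τ : Ω → ℝ) (hτ : IsStoppingTime ℱ (fun ω => (τ ω : WithTop ℝ))) (hτm : ∀ ω, τ ω ∈ Icc (0:ℝ) T) :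
    Measurable[hτ.measurableSpace] (fun ω => X (τ ω) ω) := by
  set proj : ℝ → ℝ := fun t => max 0 (min t T) with hprojdef
  have hproj_cont : Continuous proj := continuous_const.max (continuous_id.min continuous_const)
  have hprojmem : ∀ t, proj t ∈ Icc (0:ℝ) T := fun t =>
    ⟨le_max_left _ _, max_le hT (min_le_right _ _)⟩
  have hprojle : ∀ t, proj t ≤ max t 0 := fun t =>
    max_le (le_max_right _ _) ((min_le_left _ _).trans (le_max_left _ _))
  set ℱ' : Filtration ℝ m :=
    { seq := fun t => ℱ (max t 0)
      mono' := fun s t hst => ℱ.mono (max_le_max hst le_rfl)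
      le' := fun t => ℱ.le _ } with hℱ'def
  have hτ' : IsStoppingTime ℱ' (fun ω => (τ ω : WithTop ℝ)) := by
    intro t
    rcases le_or_gt 0 t with ht | ht
    · exact (ℱ.mono (le_max_left t 0)) _ (hτ t)
    · have : {ω | (τ ω : WithTop ℝ) ≤ t} = (∅ : Set Ω) := by
        ext ω; simp only [mem_setOf_eq, mem_empty_iff_false, iff_false, WithTop.coe_le_coe, not_le]
        exact lt_of_lt_of_le ht (hτm ω).1
      rw [this]; exact @MeasurableSet.empty _ (ℱ' t)
  set Y : ℝ → Ω → ℝ := fun t ω => X (proj t) ω with hYdef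
  have hYadp : Adapted ℱ' Y := fun t =>
    (hadp (proj t)).mono (ℱ.mono (hprojle t)) le_rfl
  have hYcont : ∀ ω, Continuous fun t => Y t ω := fun ω =>
    (hcont ω).comp_continuous hproj_cont hprojmem
  have hprog : ProgMeasurable ℱ' Y := hYadp.stronglyAdapted.isStronglyProgressive_of_continuous hYcont
  have hmeas := measurable_stoppedValue hprog hτ'
  have hsv : stoppedValue Y (fun ω => (τ ω : WithTop ℝ)) = fun ω => X (τ ω) ω := by
    funext ω
    simp only [stoppedValue, hYdef, hprojdef, WithTop.untopD_coe]
    rw [min_eq_left (hτm ω).2, max_eq_right (hτm ω).1]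
  rw [hsv] at hmeas
  have hle : hτ'.measurableSpace ≤ hτ.measurableSpace := by
    intro s hs
    rw [IsStoppingTime.measurableSet] at hs ⊢
    refine ⟨(iSup_le fun t => le_iSup (fun i => ℱ i) (max t 0)) s hs.1, fun t => ?_⟩
    rcases le_or_gt 0 t with ht | ht
    · have := hs.2 t
      exact (congrArg (fun i => ℱ i) (max_eq_left ht)).le _ this
    · have : s ∩ {ω | (τ ω : WithTop ℝ) ≤ t} = (∅ : Set Ω) := by
        ext ω; simp only [mem_inter_iff, mem_setOf_eq, mem_empty_iff_false, iff_false, not_and, WithTop.coe_le_coe, not_le]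
        exact fun _ => lt_of_lt_of_le ht (hτm ω).1
      rw [this]; exact @MeasurableSet.empty _ (ℱ t)
  exact hmeas.mono hle le_rfl


lemma neg_image_eq {Ω : Type*} (X : ℝ → Ω → ℝ) (T : ℝ) (τ : Ω → ℝ) (h : ℝ) (ω : Ω) :
    (fun t => (fun t ω => -(X t ω)) (τ ω + t) ω - (fun t ω => -(X t ω)) (τ ω) ω) '' Ico h (T - τ ω)
      = -((fun t => X (τ ω + t) ω - X (τ ω) ω) '' Ico h (T - τ ω)) := by
  rw [← Set.image_neg_eq_neg, ← Set.image_comp]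
  apply Set.image_congr
  intro t _
  simp only [Function.comp_apply]
  ring

lemma FXevInfPos_neg {Ω : Type*} (X : ℝ → Ω → ℝ) (T : ℝ) (τ : Ω → ℝ) (h c : ℝ) :
    FXevInfPos (fun t ω => -(X t ω)) T τ h c = FXevInfNeg X T τ h c := by
  ext ω
  simp only [FXevInfPos, FXevInfNeg, mem_setOf_eq]
  rw [neg_image_eq X T τ h ω]
  rw [show sSup (-((fun t => X (τ ω + t) ω - X (τ ω) ω) '' Ico h (T - τ ω)))
      = -sInf ((fun t => X (τ ω + t) ω - X (τ ω) ω) '' Ico h (T - τ ω)) by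
    rw [Real.sInf_def, neg_neg]]
  constructor <;> intro hx <;> linarith

lemma FXevInfNeg_neg {Ω : Type*} (X : ℝ → Ω → ℝ) (T : ℝ) (τ : Ω → ℝ) (h c : ℝ) :
    FXevInfNeg (fun t ω => -(X t ω)) T τ h c = FXevInfPos X T τ h c := by
  ext ω
  simp only [FXevInfPos, FXevInfNeg, mem_setOf_eq]
  rw [neg_image_eq X T τ h ω]
  rw [show sInf (-((fun t => X (τ ω + t) ω - X (τ ω) ω) '' Ico h (T - τ ω)))
      = -sSup ((fun t => X (τ ω + t) ω - X (τ ω) ω) '' Ico h (T - τ ω)) by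
    rw [Real.sInf_def, neg_neg]]
  constructor <;> intro hx <;> linarith


lemma condNA_neg {Ω : Type*} {m : MeasurableSpace Ω} {P : Measure Ω} {ℱ : Filtration ℝ m}
    {T : ℝ} {X : ℝ → Ω → ℝ} (hNA : CondNA P ℱ T X) :
    CondNA P ℱ T (fun t ω => -(X t ω)) := by
  intro h hh τ hτ hmem c hc
  rw [FXevInfPos_neg, FXevInfNeg_neg]
  exact (hNA h hh τ hτ hmem c hc).symm


/-- key positivity lemma -/
lemma pos_of_condexp_pos {Ω : Type*} {m : MeasurableSpace Ω} (P : Measure Ω)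
    [IsProbabilityMeasure P] {ℱ : Filtration ℝ m} {τ : Ω → ℝ} (hτ : IsStoppingTime ℱ (fun ω => (τ ω : WithTop ℝ)))
    (A : Set Ω) (hA : MeasurableSet[hτ.measurableSpace] A) (hPA : 0 < P A)
    (F : Set Ω)
    (hFpos : ∀ᵐ ω ∂P, 0 < (P[F.indicator (fun _ => (1:ℝ)) | hτ.measurableSpace]) ω) :
    0 < P (A ∩ F) := by
  have hms : hτ.measurableSpace ≤ m := hτ.measurableSpace_le
  by_cases hint : Integrable (F.indicator fun _ => (1:ℝ)) P
  · by_contra hcon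
    push_neg at hcon
    have hz : P (A ∩ F) = 0 := le_antisymm hcon zero_le
    set g := P[F.indicator (fun _ => (1:ℝ)) | hτ.measurableSpace] with hgdef
    have h1 : ∫ ω in A, g ω ∂P = ∫ ω in A, F.indicator (fun _ => (1:ℝ)) ω ∂P :=
      setIntegral_condExp hms hint hA
    have h2 : ∫ ω in A, F.indicator (fun _ => (1:ℝ)) ω ∂P = 0 := by
      have hF0 : (P.restrict A) F = 0 := by
        rw [Measure.restrict_apply' (hms _ hA), inter_comm]
        exact hz
      have hnm : ∀ᵐ ω ∂(P.restrict A), ω ∉ F := measure_eq_zero_iff_ae_notMem.mp hF0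
      refine integral_eq_zero_of_ae ?_
      filter_upwards [hnm] with ω hω
      simp [Set.indicator_of_notMem hω]
    have h3 : 0 < ∫ ω in A, g ω ∂P := by
      rw [setIntegral_pos_iff_support_of_nonneg_ae
        (ae_restrict_of_ae (condExp_nonneg (by
          filter_upwards with ω
          exact Set.indicator_nonneg (fun _ _ => zero_le_one) ω)))
        integrable_condExp.integrableOn]
      have hsub : P (A \ Function.support g) = 0 := by
        refine measure_mono_null (fun ω hω => ?_) (ae_iff.mp hFpos)
        simp only [mem_setOf_eq, not_lt]
        have : g ω = 0 := by
          have := hω.2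
          simpa [Function.mem_support, not_not] using this
        rw [this]
      have hle : P A ≤ P (Function.support g ∩ A) := by
        calc P A ≤ P ((Function.support g ∩ A) ∪ (A \ Function.support g)) := by
              refine measure_mono (fun ω hω => ?_)
              by_cases hs : ω ∈ Function.support g
              · exact Or.inl ⟨hs, hω⟩
              · exact Or.inr ⟨hω, hs⟩
          _ ≤ P (Function.support g ∩ A) + P (A \ Function.support g) := measure_union_le _ _
          _ = P (Function.support g ∩ A) := by rw [hsub, add_zero]
      exact lt_of_lt_of_le hPA hle
    rw [h1, h2] at h3
    exact lt_irrefl _ h3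
  · exfalso
    rw [condExp_of_not_integrable hint] at hFpos
    haveI : (ae P).NeBot := ae_neBot.mpr (IsProbabilityMeasure.ne_zero P)
    obtain ⟨ω, hω⟩ := hFpos.exists
    simp at hω


theorem auxthm {Ω : Type*} {m : MeasurableSpace Ω} (P : Measure Ω)
    [IsProbabilityMeasure P] (ℱ : Filtration ℝ m) (T : ℝ) (hT : 0 < T)
    (X : ℝ → Ω → ℝ) (hadp : Adapted ℱ X)
    (hcont : ∀ ω, ContinuousOn (fun t => X t ω) (Icc 0 T))
    (hNA : CondNA P ℱ T X)
    (f : ℝ → ℝ) (hf : Continuous f)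
    (hbot : Tendsto f atBot atBot) (htop : Tendsto f atTop atTop) :
    ∀ h ∈ Ioo (0:ℝ) T, ∀ (τ : Ω → ℝ) (hτ : IsStoppingTime ℱ (fun ω => (τ ω : WithTop ℝ))),
      (∀ ω, τ ω ∈ Ico (0:ℝ) (T - h)) → ∀ C > (0:ℝ),
      ∀ A : Set Ω, MeasurableSet[hτ.measurableSpace] A → 0 < P A →
      0 < P (A ∩ FXevInfPos (fun t ω => f (X t ω)) T τ h C) ∧
      0 < P (A ∩ FXevInfNeg (fun t ω => f (X t ω)) T τ h C) := by
  intro h hh τ hτ hmem C hC A hA hPA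
  have hτIcc : ∀ ω, τ ω ∈ Icc (0:ℝ) T := fun ω =>
    ⟨(hmem ω).1, le_of_lt (lt_of_lt_of_le (hmem ω).2 (by linarith [hh.1]))⟩
  have hXτ : Measurable[hτ.measurableSpace] (fun ω => X (τ ω) ω) :=
    stoppedVal_meas ℱ T hT.le X hadp hcont τ hτ hτIcc
  -- find M with positive probability
  have hUn : A = ⋃ n : ℕ, A ∩ {ω | X (τ ω) ω ∈ Icc (-(n:ℝ)) n} := by
    ext ω
    simp only [mem_iUnion, mem_inter_iff, mem_setOf_eq]
    constructor
    · intro hω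
      obtain ⟨n, hn⟩ := exists_nat_ge |X (τ ω) ω|
      exact ⟨n, hω, ⟨neg_le_of_abs_le hn, le_of_abs_le hn⟩⟩
    · rintro ⟨n, hω, _⟩; exact hω
  have hEx : ∃ n : ℕ, 0 < P (A ∩ {ω | X (τ ω) ω ∈ Icc (-(n:ℝ)) n}) := by
    by_contra hcon
    push_neg at hcon
    have h0 : ∀ n : ℕ, P (A ∩ {ω | X (τ ω) ω ∈ Icc (-(n:ℝ)) n}) = 0 :=
      fun n => le_antisymm (hcon n) zero_le
    have : P A = 0 := by rw [hUn]; exact measure_iUnion_null h0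
    exact absurd this (ne_of_gt hPA)
  obtain ⟨M, hM⟩ := hEx
  set A' := A ∩ {ω | X (τ ω) ω ∈ Icc (-(M:ℝ)) M} with hA'def
  have hA' : MeasurableSet[hτ.measurableSpace] A' :=
    hA.inter (hXτ measurableSet_Icc)
  have hMne : (Icc (-(M:ℝ)) M).Nonempty := ⟨0, by simp, by simp⟩
  obtain ⟨x0, hx0mem, hx0⟩ := isCompact_Icc.exists_isMinOn hMne hf.continuousOn
  obtain ⟨x1, hx1mem, hx1⟩ := isCompact_Icc.exists_isMaxOn hMne hf.continuousOn
  have hIcoNe : ∀ ω : Ω, (Ico h (T - τ ω)).Nonempty := fun ω =>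
    nonempty_Ico.mpr (by have := (hmem ω).2; linarith)
  have hcontS : ∀ ω : Ω, ContinuousOn (fun t => X (τ ω + t) ω - X (τ ω) ω)
      (Icc h (T - τ ω)) := by
    intro ω
    apply ContinuousOn.sub _ continuousOn_const
    apply (hcont ω).comp (continuous_const.add continuous_id).continuousOn
    intro t ht
    have h1 := (hmem ω).1
    have h2 := ht.1
    have h3 := ht.2
    have h4 := hh.1
    constructor
    · simp only [Pi.add_apply, id_eq]; linarith
    · simp only [Pi.add_apply, id_eq]; linarith
  constructor
  · -- positive direction
    have hev := hbot.eventually (eventually_le_atBot (f x0 - C - 1))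
    rw [eventually_atBot] at hev
    obtain ⟨K, hK⟩ := hev
    set c := max ((M:ℝ) - K + 1) 1 with hcdef
    have hc : (0:ℝ) < c := lt_of_lt_of_le one_pos (le_max_right _ _)
    have hsub : A' ∩ FXevInfPos X T τ h c ⊆ A ∩ FXevInfPos (fun t ω => f (X t ω)) T τ h C := by
      rintro ω ⟨⟨hωA, hωM⟩, hωF⟩
      refine ⟨hωA, ?_⟩
      simp only [FXevInfPos, mem_setOf_eq] at hωF ⊢
      have hbdd : BddAbove ((fun t => X (τ ω + t) ω - X (τ ω) ω) '' Ico h (T - τ ω)) :=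
        BddAbove.mono (image_mono Ico_subset_Icc_self)
          (isCompact_Icc.bddAbove_image (hcontS ω))
      have helt : ∀ t ∈ Ico h (T - τ ω), X (τ ω + t) ω ≤ K := by
        intro t ht
        have h1 : X (τ ω + t) ω - X (τ ω) ω < -c :=
          lt_of_le_of_lt (le_csSup hbdd (mem_image_of_mem _ ht)) hωF
        have h2 : (M:ℝ) - K + 1 ≤ c := le_max_left _ _
        have h3 := hωM.2
        linarith
      have hfim : ∀ y ∈ (fun t => f (X (τ ω + t) ω) - f (X (τ ω) ω)) '' Ico h (T - τ ω),
          y ≤ -C - 1 := by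
        rintro y ⟨t, ht, rfl⟩
        have hfb : f (X (τ ω + t) ω) ≤ f x0 - C - 1 := hK _ (helt t ht)
        have hfl : f x0 ≤ f (X (τ ω) ω) := hx0 hωM
        dsimp only
        linarith
      calc sSup ((fun t => f (X (τ ω + t) ω) - f (X (τ ω) ω)) '' Ico h (T - τ ω))
          ≤ -C - 1 := csSup_le ((hIcoNe ω).image _) hfim
        _ < -C := by linarith
    exact lt_of_lt_of_le
      (pos_of_condexp_pos P hτ A' hA' hM _ (hNA h hh τ hτ hmem c hc).1)
      (measure_mono hsub)
  · -- negative direction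
    have hev := htop.eventually (eventually_ge_atTop (f x1 + C + 1))
    rw [eventually_atTop] at hev
    obtain ⟨K, hK⟩ := hev
    set c := max (K + (M:ℝ) + 1) 1 with hcdef
    have hc : (0:ℝ) < c := lt_of_lt_of_le one_pos (le_max_right _ _)
    have hsub : A' ∩ FXevInfNeg X T τ h c ⊆ A ∩ FXevInfNeg (fun t ω => f (X t ω)) T τ h C := by
      rintro ω ⟨⟨hωA, hωM⟩, hωF⟩
      refine ⟨hωA, ?_⟩
      simp only [FXevInfNeg, mem_setOf_eq] at hωF ⊢
      have hbdd : BddBelow ((fun t => X (τ ω + t) ω - X (τ ω) ω) '' Ico h (T - τ ω)) :=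
        BddBelow.mono (image_mono Ico_subset_Icc_self)
          (isCompact_Icc.bddBelow_image (hcontS ω))
      have helt : ∀ t ∈ Ico h (T - τ ω), K ≤ X (τ ω + t) ω := by
        intro t ht
        have h1 : c < X (τ ω + t) ω - X (τ ω) ω :=
          lt_of_lt_of_le hωF (csInf_le hbdd (mem_image_of_mem _ ht))
        have h2 : K + (M:ℝ) + 1 ≤ c := le_max_left _ _
        have h3 := hωM.1
        linarith
      have hfim : ∀ y ∈ (fun t => f (X (τ ω + t) ω) - f (X (τ ω) ω)) '' Ico h (T - τ ω),
          C + 1 ≤ y := by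
        rintro y ⟨t, ht, rfl⟩
        have hfb : f x1 + C + 1 ≤ f (X (τ ω + t) ω) := hK _ (helt t ht)
        have hfl : f (X (τ ω) ω) ≤ f x1 := hx1 hωM
        dsimp only
        linarith
      calc C < C + 1 := by linarith
        _ ≤ sInf ((fun t => f (X (τ ω + t) ω) - f (X (τ ω) ω)) '' Ico h (T - τ ω)) :=
            le_csInf ((hIcoNe ω).image _) hfim
    exact lt_of_lt_of_le
      (pos_of_condexp_pos P hτ A' hA' hM _ (hNA h hh τ hτ hmem c hc).2)
      (measure_mono hsub)

theorem condNA_stable_under_composition {Ω : Type*} {m : MeasurableSpace Ω} (P : Measure Ω)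
    [IsProbabilityMeasure P] (ℱ : Filtration ℝ m) (T : ℝ) (hT : 0 < T)
    (X : ℝ → Ω → ℝ) (hadp : Adapted ℱ X)
    (hcont : ∀ ω, ContinuousOn (fun t => X t ω) (Icc 0 T))
    (htriv : ∀ s : Set Ω, MeasurableSet[ℱ 0] s → P s = 0 ∨ P s = 1)
    (hNA : CondNA P ℱ T X)
    (f : ℝ → ℝ) (hf : Continuous f)
    (hlim : (Tendsto f atBot atBot ∧ Tendsto f atTop atTop) ∨
            (Tendsto f atBot atTop ∧ Tendsto f atTop atBot)) :
    ∀ h ∈ Ioo (0:ℝ) T, ∀ (τ : Ω → ℝ) (hτ : IsStoppingTime ℱ (fun ω => (τ ω : WithTop ℝ))),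
      (∀ ω, τ ω ∈ Ico (0:ℝ) (T - h)) → ∀ C > (0:ℝ),
      ∀ A : Set Ω, MeasurableSet[hτ.measurableSpace] A → 0 < P A →
      0 < P (A ∩ FXevInfPos (fun t ω => f (X t ω)) T τ h C) ∧
      0 < P (A ∩ FXevInfNeg (fun t ω => f (X t ω)) T τ h C) := by
  intro h hh τ hτ hmem C hC A hA hPA
  rcases hlim with ⟨hbot, htop⟩ | ⟨hbt, htb⟩
  · exact auxthm P ℱ T hT X hadp hcont hNA f hf hbot htop h hh τ hτ hmem C hC A hA hPA
  · have hres := auxthm P ℱ T hT (fun t ω => -(X t ω)) (fun t => (hadp t).neg)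
      (fun ω => (hcont ω).neg) (condNA_neg hNA) (fun y => f (-y)) (hf.comp continuous_neg)
      (htb.comp tendsto_neg_atBot_atTop) (hbt.comp tendsto_neg_atTop_atBot)
      h hh τ hτ hmem C hC A hA hPA
    simpa only [neg_neg] using hres

end
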